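/- Let S be a finite set of distinct odd positive integers and T a finite set of complex numbers with |T| = |S|, such that the L(L+1), L ∈ T, are pairwise distinct and differ from all l(l+1), l ∈ S, and sin(Lπ/2) ≠ 0 for all L ∈ T. Then the unique solution (b_L)_{L∈T} of the system ∑_{L∈T} b_L · sin(Lπ/2)/(L(L+1) − l(l+1)) = 1 for all l ∈ S is given by b_L = [∏_{l∈S} (L(L+1) − l(l+1)) / ∏_{L'∈T, L'≠L} (L(L+1) − L'(L'+1))] · 1/sin(Lπ/2). -/

import Mathlib

open Polynomial Finset Lagrange

/-- Divided-difference identity: the top coefficient of a polynomial of degree `< #s`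
equals the weighted sum of its values at the nodes. -/
lemma divided_diff {F : Type*} [Field F] {ι : Type*} [DecidableEq ι]
    (s : Finset ι) (v : ι → F) (hvs : Set.InjOn v s) (f : F[X])
    (hf : f.degree < s.card) :
    ∑ i ∈ s, nodalWeight s v i * f.eval (v i) = f.coeff (s.card - 1) := by
  rcases s.eq_empty_or_nonempty with rfl | hs
  · simp only [Finset.sum_empty, Finset.card_empty]
    exact (Polynomial.coeff_eq_zero_of_degree_lt (by simpa using hf)).symm
  · conv_rhs => rw [Lagrange.eq_interpolate hvs hf]
    rw [interpolate_apply, Polynomial.finset_sum_coeff]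
    refine (Finset.sum_congr rfl fun i hi => ?_).symm
    have hb : Lagrange.basis s v i = C (nodalWeight s v i) * nodal (s.erase i) v := by
      rw [basis_eq_prod_sub_inv_mul_nodal_div hi, nodal_erase_eq_nodal_div hi]
    have hmon : (nodal (s.erase i) v).Monic := nodal_monic
    have hdeg : (nodal (s.erase i) v).natDegree = s.card - 1 := by
      rw [natDegree_nodal, Finset.card_erase_of_mem hi]
    rw [hb, ← mul_assoc, ← C_mul, Polynomial.coeff_C_mul, ← hdeg, hmon.coeff_natDegree,
      mul_one, mul_comm]

theorem stmt_7 (S : Finset ℕ) (T : Finset ℂ)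
    (hcard : T.card = S.card)
    (hSodd : ∀ l ∈ S, Odd l ∧ 0 < l)
    (hT : ∀ L ∈ T, ∀ L' ∈ T, L * (L + 1) = L' * (L' + 1) → L = L')
    (hTS : ∀ L ∈ T, ∀ l ∈ S, L * (L + 1) ≠ (l : ℂ) * ((l : ℂ) + 1))
    (hsin : ∀ L ∈ T, Complex.sin (L * (Real.pi : ℂ) / 2) ≠ 0)
    (b : ℂ → ℂ) :
    (∀ l ∈ S, ∑ L ∈ T,
        b L * Complex.sin (L * (Real.pi : ℂ) / 2) / (L * (L + 1) - (l : ℂ) * ((l : ℂ) + 1)) = 1) ↔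
    (∀ L ∈ T, b L =
        ((∏ l ∈ S, (L * (L + 1) - (l : ℂ) * ((l : ℂ) + 1))) /
          (∏ L' ∈ T.erase L, (L * (L + 1) - L' * (L' + 1)))) *
          (Complex.sin (L * (Real.pi : ℂ) / 2))⁻¹) := by
  classical
  set v : ℂ → ℂ := fun L => L * (L + 1) with hv
  set w : ℕ → ℂ := fun l => (l : ℂ) * ((l : ℂ) + 1) with hw
  have hvT : Set.InjOn v T := fun L hL L' hL' h => hT L hL L' hL' h
  have hwS : Set.InjOn w S := by
    intro a ha b hb hab
    have : ((a * (a + 1) : ℕ) : ℂ) = ((b * (b + 1) : ℕ) : ℂ) := by push_cast; simpa [hw] using hab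
    have h2 : a * (a + 1) = b * (b + 1) := Nat.cast_injective this
    have hsm : StrictMono (fun n : ℕ => n * (n + 1)) :=
      strictMono_nat_of_lt_succ (fun n => by nlinarith)
    exact hsm.injective h2
  have hne : ∀ L ∈ T, ∀ l ∈ S, v L - w l ≠ 0 := fun L hL l hl =>
    sub_ne_zero.mpr (hTS L hL l hl)
  -- the candidate solution (with sin stripped)
  set c' : ℂ → ℂ := fun L => (∏ l ∈ S, (v L - w l)) * nodalWeight T v L with hc'
  -- Step A : c' solves the system
  have stepA : ∀ l ∈ S, ∑ L ∈ T, c' L / (v L - w l) = 1 := by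
    intro l hl
    have hcalc : ∀ L ∈ T, c' L / (v L - w l)
        = nodalWeight T v L * (nodal (S.erase l) w).eval (v L) := by
      intro L hL
      have h1 : v L - w l ≠ 0 := hne L hL l hl
      have h2 : c' L = (∏ l ∈ S, (v L - w l)) * nodalWeight T v L := rfl
      have h3 : (∏ l' ∈ S, (v L - w l')) = (v L - w l) * ∏ l' ∈ S.erase l, (v L - w l') :=
        (Finset.mul_prod_erase S _ hl).symm
      rw [eval_nodal, h2, h3]
      field_simp
    rw [Finset.sum_congr rfl hcalc]
    have hSpos : 0 < S.card := Finset.card_pos.mpr ⟨l, hl⟩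
    have hdeg : (nodal (S.erase l) w).degree < T.card := by
      rw [degree_nodal, Finset.card_erase_of_mem hl, hcard]
      exact_mod_cast Nat.pred_lt hSpos.ne'
    rw [divided_diff T v hvT _ hdeg]
    have hnd : (nodal (S.erase l) w).natDegree = T.card - 1 := by
      rw [natDegree_nodal, Finset.card_erase_of_mem hl, hcard]
    rw [← hnd, (nodal_monic).coeff_natDegree]
  -- relation between c' and the RHS formula
  have hformula : ∀ L ∈ T, ((∏ l ∈ S, (v L - w l)) /
          (∏ L' ∈ T.erase L, (v L - v L'))) * (Complex.sin (L * (Real.pi : ℂ) / 2))⁻¹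
        = c' L * (Complex.sin (L * (Real.pi : ℂ) / 2))⁻¹ := by
    intro L hL
    have h2 : c' L = (∏ l ∈ S, (v L - w l)) * nodalWeight T v L := rfl
    rw [h2, Lagrange.nodalWeight, div_eq_mul_inv, Finset.prod_inv_distrib]
  constructor
  · -- equations → formula
    intro hEq L hL
    rcases T.eq_empty_or_nonempty with rfl | hTne
    · exact absurd hL (by simp)
    have hSne : S.Nonempty := Finset.card_pos.mp (hcard ▸ Finset.card_pos.mpr hTne)
    set c : ℂ → ℂ := fun L => b L * Complex.sin (L * (Real.pi : ℂ) / 2) with hc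
    set d : ℂ → ℂ := fun L => c L - c' L with hd
    have hhom : ∀ l ∈ S, ∑ L ∈ T, d L / (v L - w l) = 0 := by
      intro l hl
      have := hEq l hl
      have h2 := stepA l hl
      have : ∑ L ∈ T, c L / (v L - w l) = 1 := this
      calc ∑ L ∈ T, d L / (v L - w l)
          = ∑ L ∈ T, (c L / (v L - w l) - c' L / (v L - w l)) := by
            refine Finset.sum_congr rfl fun L hL' => ?_
            rw [hd]; ring
        _ = (∑ L ∈ T, c L / (v L - w l)) - ∑ L ∈ T, c' L / (v L - w l) :=
            Finset.sum_sub_distrib _ _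
        _ = 0 := by rw [this, h2, sub_self]
    set Q : ℂ[X] := ∑ L ∈ T, C (d L) * nodal (T.erase L) v with hQ
    have hQdeg : Q.degree < S.card := by
      rw [hQ]
      refine lt_of_le_of_lt (Polynomial.degree_sum_le _ _) ?_
      rw [Finset.sup_lt_iff (by exact_mod_cast WithBot.bot_lt_coe S.card)]
      intro L hL'
      refine lt_of_le_of_lt (Polynomial.degree_mul_le _ _) ?_
      refine lt_of_le_of_lt (add_le_add Polynomial.degree_C_le le_rfl) ?_
      rw [zero_add, degree_nodal, Finset.card_erase_of_mem hL', hcard]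
      exact_mod_cast Nat.pred_lt (Finset.card_pos.mpr hSne).ne'
    have hQzero : Q = 0 := by
      refine Polynomial.eq_zero_of_degree_lt_of_eval_index_eq_zero S hwS hQdeg ?_
      intro l hl
      have key : Q.eval (w l) = (-(∏ L ∈ T, (w l - v L))) * ∑ L ∈ T, d L / (v L - w l) := by
        rw [hQ, Polynomial.eval_finset_sum, Finset.mul_sum]
        refine Finset.sum_congr rfl fun L hL' => ?_
        rw [Polynomial.eval_mul, Polynomial.eval_C, eval_nodal,
          ← Finset.mul_prod_erase T _ hL']
        have h1 : v L - w l ≠ 0 := hne L hL' l hl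
        field_simp
        ring
      rw [key, hhom l hl, mul_zero]
    have hdL : d L = 0 := by
      have hev : Q.eval (v L) = d L * ∏ L' ∈ T.erase L, (v L - v L') := by
        rw [hQ, Polynomial.eval_finset_sum, ← Finset.add_sum_erase _ _ hL,
          Polynomial.eval_mul, Polynomial.eval_C, eval_nodal]
        have hzero : ∀ L' ∈ T.erase L,
            (C (d L') * nodal (T.erase L') v).eval (v L) = 0 := by
          intro L' hL'
          rw [Polynomial.eval_mul, Polynomial.eval_C, eval_nodal]
          have hmem : L ∈ T.erase L' :=
            Finset.mem_erase.mpr ⟨(Finset.mem_erase.mp hL').1.symm, hL⟩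
          rw [Finset.prod_eq_zero hmem (by ring), mul_zero]
        rw [Finset.sum_eq_zero hzero, add_zero]
      have hprod : (∏ L' ∈ T.erase L, (v L - v L')) ≠ 0 := by
        rw [Finset.prod_ne_zero_iff]
        intro L' hL'
        have h1 := Finset.mem_erase.mp hL'
        exact sub_ne_zero.mpr fun h => h1.1 ((hvT hL h1.2 h).symm)
      have := hQzero ▸ hev
      have h0 : d L * ∏ L' ∈ T.erase L, (v L - v L') = 0 := by
        rw [← hev, hQzero, Polynomial.eval_zero]
      exact (mul_eq_zero.mp h0).resolve_right hprod
    have hcL : b L * Complex.sin (L * (Real.pi : ℂ) / 2) = c' L := by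
      have h0 : c L - c' L = 0 := hdL
      have := sub_eq_zero.mp h0
      exact this
    show b L = ((∏ l ∈ S, (v L - w l)) / (∏ L' ∈ T.erase L, (v L - v L'))) *
        (Complex.sin (L * (Real.pi : ℂ) / 2))⁻¹
    rw [hformula L hL, ← hcL, mul_assoc, mul_inv_cancel₀ (hsin L hL), mul_one]
  · -- formula → equations
    intro hF l hl
    have : ∀ L ∈ T, b L * Complex.sin (L * (Real.pi : ℂ) / 2) = c' L := by
      intro L hL
      rw [hF L hL, hformula L hL, mul_assoc,
        inv_mul_cancel₀ (hsin L hL), mul_one]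
    calc ∑ L ∈ T, b L * Complex.sin (L * (Real.pi : ℂ) / 2) / (v L - w l)
        = ∑ L ∈ T, c' L / (v L - w l) :=
          Finset.sum_congr rfl fun L hL => by rw [this L hL]
      _ = 1 := stepA l hl
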